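/- arXiv:1805.05567 — 3 statements merged into one kernel-verified Lean document; each statement's English description precedes it below -/
import Mathlib

section
/- Let H be a complex Hilbert space and let Q be a linear map assigning to each bounded (Borel) measurable function f : ℝ × ℝ → ℂ a bounded linear operator Q(f) on H, such that Q(conj f) = (Q f)* (Q is *-preserving) and Q is continuous when its domain carries the initial topology induced by the functionals f ↦ ∫ f dμ, μ ranging over the finite Borel measures on ℝ × ℝ, and its codomain B(H) carries the weak operator topology. Then for all vectors φ, ψ ∈ H the maps a ↦ ⟨φ, Q(w_{a,0}) ψ⟩ and b ↦ ⟨φ, Q(w_{0,b}) ψ⟩ from ℝ to ℂ are continuous, where w_{a,0}(q,p) = exp(i a q) and w_{0,b}(q,p) = exp(i b p). -/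
open MeasureTheory

noncomputable section

/-- The bounded (Borel) measurable complex-valued functions on the phase space `ℝ × ℝ`,
as a subspace of all functions. -/
def BddMeas : Submodule ℂ ((ℝ × ℝ) → ℂ) where
  carrier := {f | Measurable f ∧ ∃ C : ℝ, ∀ x, ‖f x‖ ≤ C}
  add_mem' := by
    rintro f g ⟨hf, C, hC⟩ ⟨hg, D, hD⟩
    exact ⟨hf.add hg, C + D, fun x =>
      (norm_add_le _ _).trans (add_le_add (hC x) (hD x))⟩
  zero_mem' := ⟨measurable_const, 0, fun x => by simp⟩
  smul_mem' := by
    rintro c f ⟨hf, C, hC⟩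
    exact ⟨hf.const_smul c, ‖c‖ * C, fun x => by
      simpa [norm_smul] using mul_le_mul_of_nonneg_left (hC x) (norm_nonneg c)⟩

/-- Bounded measurable functions are closed under complex conjugation. -/
lemma star_mem_bddMeas {f : (ℝ × ℝ) → ℂ} (hf : f ∈ BddMeas) :
    (fun x => (starRingEnd ℂ) (f x)) ∈ BddMeas := by
  obtain ⟨hm, C, hC⟩ := hf
  exact ⟨(Complex.continuous_conj.measurable).comp hm, C, fun x => by
    simpa [RCLike.norm_conj] using hC x⟩

/-- The classical Weyl unitary `w_{a,b}(q,p) = exp(i (a q + b p))`, as a bounded measurable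
function on phase space. -/
def weylW (a b : ℝ) : BddMeas :=
  ⟨fun x : ℝ × ℝ => Complex.exp (((a * x.1 + b * x.2 : ℝ) : ℂ) * Complex.I),
   ⟨(Complex.continuous_exp.comp
      ((Complex.continuous_ofReal.comp (by fun_prop)).mul continuous_const)).measurable,
    1, fun x => le_of_eq (by exact Complex.norm_exp_ofReal_mul_I _)⟩⟩

/-- The weak* topology on the bounded measurable functions: the initial topology induced by
the integration functionals `f ↦ ∫ f dμ`, `μ` ranging over finite Borel measures on `ℝ × ℝ`. -/
def weakStarTop : TopologicalSpace BddMeas :=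
  ⨅ μ : {μ : Measure (ℝ × ℝ) // IsFiniteMeasure μ},
    TopologicalSpace.induced
      (fun f : BddMeas => ∫ x, (f : (ℝ × ℝ) → ℂ) x ∂μ.1)
      inferInstance

/-- The weak operator topology on `B(H)`: the initial topology induced by the functionals
`T ↦ ⟨φ, T ψ⟩`. -/
def wot (H : Type*) [NormedAddCommGroup H] [InnerProductSpace ℂ H] :
    TopologicalSpace (H →L[ℂ] H) :=
  ⨅ p : H × H,
    TopologicalSpace.induced (fun T : H →L[ℂ] H => (inner ℂ p.1 (T p.2) : ℂ)) inferInstance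

lemma eval_wot_continuous {H : Type*} [NormedAddCommGroup H] [InnerProductSpace ℂ H]
    (φ ψ : H) :
    @Continuous _ _ (wot H) _ (fun T : H →L[ℂ] H => (inner ℂ φ (T ψ) : ℂ)) :=
  continuous_iInf_dom (i := (φ, ψ)) continuous_induced_dom

lemma weyl_cont (c : (ℝ × ℝ) → ℝ) (hc : Continuous c)
    (F : ℝ → BddMeas)
    (hF : ∀ t x, ((F t : (ℝ × ℝ) → ℂ) x) = Complex.exp (((t * c x : ℝ) : ℂ) * Complex.I)) :
    @Continuous _ _ _ weakStarTop F := by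
  rw [weakStarTop]
  apply continuous_iInf_rng.2
  intro μ
  apply continuous_induced_rng.2
  haveI := μ.2
  have : (fun t : ℝ => ∫ x, (F t : (ℝ × ℝ) → ℂ) x ∂μ.1)
      = fun t : ℝ => ∫ x, Complex.exp (((t * c x : ℝ) : ℂ) * Complex.I) ∂μ.1 := by
    funext t; exact integral_congr_ae (Filter.Eventually.of_forall (hF t))
  simp only [Function.comp_def]
  rw [this]
  apply continuous_of_dominated (bound := fun _ => (1 : ℝ))
  · intro t
    exact ((Complex.continuous_exp.comp
      ((Complex.continuous_ofReal.comp (continuous_const.mul hc)).mul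
        continuous_const)).aestronglyMeasurable)
  · intro t
    refine Filter.Eventually.of_forall fun x => ?_
    rw [Complex.norm_exp_ofReal_mul_I]
  · exact integrable_const 1
  · refine Filter.Eventually.of_forall fun x => ?_
    exact Complex.continuous_exp.comp
      ((Complex.continuous_ofReal.comp (continuous_mul_right (c x))).mul continuous_const)

/-- If a linear, *-preserving quantization map `Q` from the bounded measurable functions on
phase space into `B(H)` is continuous from the weak* topology to the weak operator topology,
then the (identity) representation is regular: `a ↦ ⟨φ, Q(w_{a,0}) ψ⟩` and
`b ↦ ⟨φ, Q(w_{0,b}) ψ⟩` are continuous. -/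
theorem weakly_continuous_quantization_regular
    {H : Type*} [NormedAddCommGroup H] [InnerProductSpace ℂ H] [CompleteSpace H]
    (Q : BddMeas →ₗ[ℂ] (H →L[ℂ] H))
    (hstar : ∀ f : BddMeas,
      Q ⟨fun x => (starRingEnd ℂ) ((f : (ℝ × ℝ) → ℂ) x), star_mem_bddMeas f.2⟩
        = ContinuousLinearMap.adjoint (Q f))
    (hcont : @Continuous _ _ weakStarTop (wot H) ⇑Q)
    (φ ψ : H) :
    Continuous (fun a : ℝ => (inner ℂ φ ((Q (weylW a 0)) ψ) : ℂ)) ∧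
    Continuous (fun b : ℝ => (inner ℂ φ ((Q (weylW 0 b)) ψ) : ℂ)) := by
  have h1 : @Continuous _ _ _ weakStarTop (fun a : ℝ => weylW a 0) :=
    weyl_cont (fun x => x.1) continuous_fst _ (fun t x => by simp [weylW])
  have h2 : @Continuous _ _ _ weakStarTop (fun b : ℝ => weylW 0 b) :=
    weyl_cont (fun x => x.2) continuous_snd _ (fun t x => by simp [weylW])
  have c1 : @Continuous _ _ _ (wot H) (fun a : ℝ => Q (weylW a 0)) :=
    @Continuous.comp ℝ _ _ _ weakStarTop (wot H) _ _ hcont h1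
  have c2 : @Continuous _ _ _ (wot H) (fun b : ℝ => Q (weylW 0 b)) :=
    @Continuous.comp ℝ _ _ _ weakStarTop (wot H) _ _ hcont h2
  exact ⟨@Continuous.comp ℝ _ ℂ _ (wot H) _ _ _ (eval_wot_continuous φ ψ) c1,
    @Continuous.comp ℝ _ ℂ _ (wot H) _ _ _ (eval_wot_continuous φ ψ) c2⟩

end
end

section
/- Let H be a complex Hilbert space and let A be a norm-closed unital *-subalgebra of B(H) (a concrete unital C*-algebra acting on H). Then for every state ω on A, every ε > 0, and every finite set F ⊆ A, there exist finitely many unit vectors ψ₁, …, ψₙ ∈ H and nonnegative reals t₁, …, tₙ with Σᵢ tᵢ = 1 such that |ω(x) − Σᵢ tᵢ ⟨ψᵢ, x ψᵢ⟩| < ε for all x ∈ F. -/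
open scoped ComplexOrder
set_option maxHeartbeats 1000000

theorem state_star' {A : Type*} [CStarAlgebra A] (ω : A →ₗ[ℂ] ℂ)
    (hpos : ∀ x : A, 0 ≤ ω (star x * x)) (x : A) : ω (star x) = starRingEnd ℂ (ω x) := by
  have key : ∀ y z : A, ω (star z * y) = starRingEnd ℂ (ω (star y * z)) := by
    intro y z
    have h1 := hpos (y + z)
    have h2 := hpos (y + Complex.I • z)
    have e1 : star (y + z) * (y + z)
        = star y * y + star z * z + (star y * z + star z * y) := by
      simp only [star_add, add_mul, mul_add]; abel
    have e2 : star (y + Complex.I • z) * (y + Complex.I • z)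
        = star y * y + star z * z + (Complex.I • (star y * z) - Complex.I • (star z * y)) := by
      simp only [star_add, add_mul, mul_add, star_smul, RCLike.star_def, Complex.conj_I,
        smul_mul_assoc, mul_smul_comm]
      match_scalars <;> simp [Complex.I_sq]
    rw [e1] at h1; rw [e2] at h2
    simp only [map_add, map_sub, map_smul] at h1 h2
    have hy := hpos y; have hz := hpos z
    rw [Complex.le_def] at h1 h2 hy hz
    simp only [Complex.add_im, Complex.sub_im, Complex.smul_im, Complex.zero_im,
      Complex.add_re, Complex.zero_re, smul_eq_mul, Complex.mul_im, Complex.mul_re,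
      Complex.I_re, Complex.I_im] at *
    apply Complex.ext <;>
      simp only [Complex.conj_re, Complex.conj_im] <;>
      nlinarith [h1.2, h2.2, hy.2, hz.2]
  simpa using (key 1 x)

theorem exists_star_mul_self' {A : Type*} [CStarAlgebra A] (d : A) (hd : IsSelfAdjoint d)
    (hspec : ∀ x ∈ spectrum ℝ d, 0 ≤ x) : ∃ c : A, d = star c * c := by
  refine ⟨cfc Real.sqrt d, ?_⟩
  have hsa : IsSelfAdjoint (cfc Real.sqrt d) := cfc_predicate Real.sqrt d
  rw [hsa.star_eq, ← cfc_mul Real.sqrt Real.sqrt d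
    (Real.continuous_sqrt.continuousOn) (Real.continuous_sqrt.continuousOn)]
  conv_lhs => rw [← cfc_id ℝ d hd]
  exact cfc_congr fun x hx => (Real.mul_self_sqrt (hspec x hx)).symm

theorem real_functional_decomp' {ι : Type*} [Fintype ι] [DecidableEq ι]
    (f : (ι → ℂ) →L[ℝ] ℝ) (z : ι → ℂ) :
    f z = ∑ j, (((f (Pi.single j 1) : ℝ) - (f (Pi.single j Complex.I) : ℝ) * Complex.I) * z j).re := by
  have hz : z = ∑ j, Pi.single j (z j) := by
    ext k; simp [Finset.sum_apply, Pi.single_apply]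
  conv_lhs => rw [hz]
  rw [map_sum]
  refine Finset.sum_congr rfl fun j _ => ?_
  have : Pi.single j (z j) = (z j).re • (Pi.single j (1:ℂ) : ι → ℂ)
      + (z j).im • (Pi.single j Complex.I : ι → ℂ) := by
    rw [← Pi.single_smul, ← Pi.single_smul, ← Pi.single_add]
    simp only [Complex.real_smul, mul_one]
    exact congrArg _ (Complex.re_add_im (z j)).symm
  rw [this, map_add, map_smul, map_smul]
  simp only [sub_mul, Complex.sub_re, Complex.mul_re, Complex.mul_im, Complex.I_re,
    Complex.I_im, Complex.ofReal_re, Complex.ofReal_im, smul_eq_mul]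
  ring

/-- Every state on a norm-closed unital *-subalgebra `A` of `B(H)` is approximated,
uniformly on finite sets of elements of `A`, by convex combinations of vector states of `H`
restricted to `A`. -/
theorem vector_states_weakStar_dense_concrete_Cstar
    {H : Type*} [NormedAddCommGroup H] [InnerProductSpace ℂ H] [CompleteSpace H]
    (A : StarSubalgebra ℂ (H →L[ℂ] H))
    (hA : IsClosed (A : Set (H →L[ℂ] H)))
    (ω : A → ℂ)
    (hadd : ∀ x y : A, ω (x + y) = ω x + ω y)
    (hsmul : ∀ (c : ℂ) (x : A), ω (c • x) = c * ω x)
    (hcont : Continuous ω)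
    (hone : ω 1 = 1)
    (hpos : ∀ x : A, 0 ≤ ω (star x * x))
    (ε : ℝ) (hε : 0 < ε) (F : Finset A) :
    ∃ (n : ℕ) (ψ : Fin n → H) (t : Fin n → ℝ),
      (∀ i, ‖ψ i‖ = 1) ∧ (∀ i, 0 ≤ t i) ∧ (∑ i, t i) = 1 ∧
      ∀ x ∈ F,
        ‖ω x - ∑ i, (t i : ℂ) *
          (inner ℂ (ψ i) ((x : H →L[ℂ] H) (ψ i)) : ℂ)‖ < ε := by
  classical
  have hΩsmul : ∀ (c : ℂ) (x : A), ω (c • x) = (RingHom.id ℂ) c • ω x := by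
    intro c x; simpa using hsmul c x
  let Ω : A →ₗ[ℂ] ℂ := ⟨⟨ω, hadd⟩, hΩsmul⟩
  have hΩ : ∀ x : A, Ω x = ω x := fun _ => rfl
  rcases subsingleton_or_nontrivial H with hH | hH
  · exfalso
    have h10 : (1 : A) = 0 := Subtype.ext (Subsingleton.elim _ _)
    have h0 : ω (0 : A) = 0 := by
      have := hsmul 0 0; simpa using this
    rw [h10, h0] at hone
    exact one_ne_zero hone.symm
  haveI hAc : IsClosed (A : Set (H →L[ℂ] H)) := hA
  -- a unit vector exists
  obtain ⟨x0, hx0⟩ := exists_ne (0 : H)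
  have hψ₀ : ‖(‖x0‖⁻¹ • x0 : H)‖ = 1 := by
    rw [norm_smul, norm_inv, norm_norm, inv_mul_cancel₀ (norm_ne_zero_iff.mpr hx0)]
  -- the finite-dimensional picture
  let v : H → (↥F → ℂ) := fun ψ j => (inner ℂ ψ (((j : A) : H →L[ℂ] H) ψ) : ℂ)
  let K : Set (↥F → ℂ) := v '' {ψ : H | ‖ψ‖ = 1}
  let w : ↥F → ℂ := fun j => ω j
  have hwS : w ∈ closure (convexHull ℝ K) := by
    by_contra hw
    obtain ⟨f, u, hfu, huw⟩ := geometric_hahn_banach_closed_point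
      ((convex_convexHull ℝ K).closure) isClosed_closure hw
    set c : ↥F → ℂ := fun j =>
      ((f (Pi.single j 1) : ℝ) : ℂ) - ((f (Pi.single j Complex.I) : ℝ) : ℂ) * Complex.I with hc
    have hf : ∀ z : ↥F → ℂ, f z = (∑ j, c j * z j).re := by
      intro z
      rw [real_functional_decomp' f z, Complex.re_sum]
    set a : A := ∑ j : ↥F, c j • (j : A) with ha
    have hωa : Ω a = ∑ j : ↥F, c j * ω (j : A) := by
      rw [ha, map_sum]
      exact Finset.sum_congr rfl fun j _ => by rw [map_smul]; simp [hΩ]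
    have hfw : f w = (Ω a).re := by
      rw [hf, hωa]
    -- the operator side
    have hcoe : ((a : A) : H →L[ℂ] H) = ∑ j : ↥F, c j • ((j : A) : H →L[ℂ] H) := by
      rw [ha]
      push_cast
      rfl
    have hva : ∀ ψ : H,
        (inner ℂ ψ (((a : A) : H →L[ℂ] H) ψ) : ℂ) = ∑ j : ↥F, c j * v ψ j := by
      intro ψ
      rw [hcoe]
      simp [ContinuousLinearMap.sum_apply, inner_sum, inner_smul_right, v]
    have hfv : ∀ ψ : H, f (v ψ) = (inner ℂ ψ (((a : A) : H →L[ℂ] H) ψ) : ℂ).re := by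
      intro ψ; rw [hf, hva]
    -- selfadjoint part
    set b : A := (2⁻¹ : ℂ) • (a + star a) with hb
    have hb_sa : IsSelfAdjoint b := by
      rw [hb]
      refine IsSelfAdjoint.smul ?_ (IsSelfAdjoint.add_star_self a)
      rw [IsSelfAdjoint]; simp
    have hstar : Ω (star a) = starRingEnd ℂ (Ω a) := state_star' Ω (fun x => hpos x) a
    have hωb : Ω b = ((Ω a).re : ℂ) := by
      rw [hb, map_smul, map_add, hstar, smul_eq_mul, Complex.add_conj]
      push_cast
      ring
    have hbψ : ∀ ψ : H,
        (inner ℂ ψ (((b : A) : H →L[ℂ] H) ψ) : ℂ)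
          = (((inner ℂ ψ (((a : A) : H →L[ℂ] H) ψ) : ℂ)).re : ℂ) := by
      intro ψ
      have hbco : ((b : A) : H →L[ℂ] H)
          = (2⁻¹ : ℂ) • (((a : A) : H →L[ℂ] H) + star ((a : A) : H →L[ℂ] H)) := by
        rw [hb]; push_cast; rfl
      rw [hbco]
      simp only [ContinuousLinearMap.smul_apply, ContinuousLinearMap.add_apply,
        inner_smul_right, inner_add_right, ContinuousLinearMap.star_eq_adjoint,
        ContinuousLinearMap.adjoint_inner_right]
      rw [← inner_conj_symm (((a : A) : H →L[ℂ] H) ψ) ψ, Complex.add_conj]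
      push_cast
      ring
    -- positivity
    set d : A := (u : ℂ) • 1 - b with hd
    have hωd : Ω d = ((u - (Ω a).re : ℝ) : ℂ) := by
      rw [hd, map_sub, map_smul, hωb]
      have h1 : Ω 1 = 1 := hone
      rw [h1, smul_eq_mul]
      push_cast
      ring
    have hd_sa : IsSelfAdjoint d := by
      rw [hd]
      refine IsSelfAdjoint.sub ?_ hb_sa
      refine IsSelfAdjoint.smul ?_ ?_
      · rw [IsSelfAdjoint]; simp
      · exact IsSelfAdjoint.one ↥A
    have hdco : ((d : A) : H →L[ℂ] H) = (u : ℂ) • 1 - ((b : A) : H →L[ℂ] H) := by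
      rw [hd]; push_cast; rfl
    have hdpos : (0 : H →L[ℂ] H) ≤ ((d : A) : H →L[ℂ] H) := by
      rw [ContinuousLinearMap.nonneg_iff_isPositive, ContinuousLinearMap.isPositive_def']
      constructor
      · have : star ((d : A) : H →L[ℂ] H) = ((star d : A) : H →L[ℂ] H) := rfl
        rw [IsSelfAdjoint, this, hd_sa.star_eq]
      · intro ψ
        rw [ContinuousLinearMap.reApplyInnerSelf_apply, inner_re_symm,
          RCLike.re_to_complex]
        rcases eq_or_ne ψ 0 with rfl | hψ
        · simp
        · have hr : (0:ℝ) < ‖ψ‖ := norm_pos_iff.mpr hψ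
          set ψ' : H := ‖ψ‖⁻¹ • ψ with hψ'
          have hψ'1 : ‖ψ'‖ = 1 := by
            rw [hψ', norm_smul, norm_inv, norm_norm, inv_mul_cancel₀ hr.ne']
          have hK : v ψ' ∈ closure (convexHull ℝ K) :=
            subset_closure (subset_convexHull ℝ K ⟨ψ', hψ'1, rfl⟩)
          have hlt : (inner ℂ ψ' (((a : A) : H →L[ℂ] H) ψ') : ℂ).re < u := by
            rw [← hfv ψ']; exact hfu _ hK
          -- rewrite inner products
          have hψeq : ψ = (‖ψ‖ : ℂ) • ψ' := by
            rw [hψ', Complex.coe_smul, smul_smul, mul_inv_cancel₀ hr.ne', one_smul]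
          have hscale : (inner ℂ ψ (((b : A) : H →L[ℂ] H) ψ) : ℂ)
              = (‖ψ‖^2 : ℝ) • (inner ℂ ψ' (((b : A) : H →L[ℂ] H) ψ') : ℂ) := by
            conv_lhs => rw [hψeq]
            rw [map_smul, inner_smul_left, inner_smul_right]
            simp [Complex.real_smul, Complex.conj_ofReal]
            push_cast
            ring
          rw [hdco]
          simp only [ContinuousLinearMap.sub_apply, ContinuousLinearMap.smul_apply,
            ContinuousLinearMap.one_apply, inner_sub_right, inner_smul_right]
          rw [hscale, hbψ ψ']
          have hnn : (inner ℂ ψ ψ : ℂ) = ((‖ψ‖^2 : ℝ) : ℂ) := by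
            rw [inner_self_eq_norm_sq_to_K]; norm_cast
          rw [hnn]
          simp only [Complex.sub_re, Complex.mul_re, Complex.ofReal_re, Complex.ofReal_im,
            Complex.smul_re, Complex.smul_im, smul_eq_mul]
          have := hlt
          nlinarith [sq_nonneg ‖ψ‖, hr]
    have hspec : ∀ x ∈ spectrum ℝ d, 0 ≤ x := by
      intro x hx
      have hxC : (algebraMap ℝ ℂ x) ∈ spectrum ℂ d := spectrum.algebraMap_mem ℂ hx
      rw [StarSubalgebra.spectrum_eq A (a := d)] at hxC
      have := spectrum_nonneg_of_nonneg hdpos hxC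
      simpa using this
    obtain ⟨cc, hcc⟩ := exists_star_mul_self' d hd_sa hspec
    have h0 : 0 ≤ Ω d := by rw [hΩ, hcc]; exact hpos cc
    rw [hωd] at h0
    rw [Complex.le_def] at h0
    simp only [Complex.zero_re, Complex.ofReal_re] at h0
    have : f w ≤ u := by rw [hfw]; linarith [h0.1]
    linarith
  -- extract the approximation
  obtain ⟨s, hsS, hs⟩ := Metric.mem_closure_iff.mp hwS ε hε
  rw [mem_convexHull_iff_exists_fintype] at hsS
  obtain ⟨ι, hι, t, z, ht0, ht1, hzK, hzs⟩ := hsS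
  choose φ hφ hφv using fun i => (hzK i)
  let e : Fin (Fintype.card ι) ≃ ι := (Fintype.equivFin ι).symm
  refine ⟨Fintype.card ι, fun i => φ (e i), fun i => t (e i),
    fun i => hφ (e i), fun i => ht0 (e i), ?_, ?_⟩
  · rw [Equiv.sum_comp e t, ht1]
  · intro x hx
    have hkey : ω x - ∑ i, ((t (e i) : ℂ) *
        (inner ℂ (φ (e i)) ((x : H →L[ℂ] H) (φ (e i))) : ℂ)) = (w - s) ⟨x, hx⟩ := by
      have hsum : ∑ i, ((t (e i) : ℂ) *
          (inner ℂ (φ (e i)) ((x : H →L[ℂ] H) (φ (e i))) : ℂ))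
          = ∑ i : ι, (t i : ℂ) * v (φ i) ⟨x, hx⟩ := by
        rw [← Equiv.sum_comp e (fun i => (t i : ℂ) * v (φ i) ⟨x, hx⟩)]
      rw [hsum]
      have hsx : s ⟨x, hx⟩ = ∑ i : ι, (t i : ℂ) * v (φ i) ⟨x, hx⟩ := by
        rw [← hzs]
        rw [Finset.sum_apply]
        exact Finset.sum_congr rfl fun i _ => by
          rw [← hφv i]; simp [Complex.real_smul]
      rw [Pi.sub_apply, hsx]
    rw [hkey]
    calc ‖(w - s) ⟨x, hx⟩‖ ≤ ‖w - s‖ := norm_le_pi_norm (w - s) ⟨x, hx⟩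
      _ = dist w s := (dist_eq_norm w s).symm
      _ < ε := hs
end

section
/- Fell's theorem (approximation of vector states): Let A be a unital C*-algebra and let π₁ : A → B(H₁) and π₂ : A → B(H₂) be unital *-homomorphisms (representations) on complex Hilbert spaces H₁, H₂, such that the kernel of π₂ is contained in the kernel of π₁ (for all a ∈ A, π₂(a) = 0 implies π₁(a) = 0). Then for every unit vector ψ ∈ H₁, every ε > 0, and every finite set F ⊆ A, there exist finitely many unit vectors φ₁, …, φₙ ∈ H₂ and nonnegative reals t₁, …, tₙ with Σᵢ tᵢ = 1 such that |⟨ψ, π₁(a) ψ⟩ − Σᵢ tᵢ ⟨φᵢ, π₂(a) φᵢ⟩| < ε for all a ∈ F. -/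
open ContinuousLinearMap

section aux
variable {A : Type*} [NormedRing A] [StarRing A] [CStarRing A]
    [NormedAlgebra ℂ A] [StarModule ℂ A] [CompleteSpace A]
    {H₁ H₂ : Type*}
    [NormedAddCommGroup H₁] [InnerProductSpace ℂ H₁] [CompleteSpace H₁]
    [NormedAddCommGroup H₂] [InnerProductSpace ℂ H₂] [CompleteSpace H₂]

noncomputable local instance : CStarAlgebra A := {}

lemma fell_sq (π : A →⋆ₐ[ℂ] (H₁ →L[ℂ] H₁)) {s : A} (hs : IsSelfAdjoint s) :
    (π (s * s)).IsPositive := by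
  have hps : IsSelfAdjoint (π s) := hs.map π
  have h1 : adjoint (π s) = π s := by
    rw [← star_eq_adjoint]; exact hps
  have := isPositive_one.conj_adjoint (π s)
  rw [h1] at this
  simpa [map_mul, mul_def, one_def, comp_id] using this

lemma fell_negPart_sq {c : A} (hc : IsSelfAdjoint c) :
    ∃ s : A, IsSelfAdjoint s ∧ s * s = c⁻ := by
  refine ⟨cfcₙ (fun x : ℝ => Real.sqrt (x⁻)) c, cfcₙ_predicate _ c, ?_⟩
  rw [← cfcₙ_mul _ _ c (by fun_prop) (by simp) (by fun_prop) (by simp), CFC.negPart_def]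
  exact cfcₙ_congr fun x _ => Real.mul_self_sqrt (negPart_nonneg x)

lemma fell_posPart_sq {c : A} (hc : IsSelfAdjoint c) :
    ∃ s : A, IsSelfAdjoint s ∧ s * s = c⁺ := by
  refine ⟨cfcₙ (fun x : ℝ => Real.sqrt (x⁺)) c, cfcₙ_predicate _ c, ?_⟩
  rw [← cfcₙ_mul _ _ c (by fun_prop) (by simp) (by fun_prop) (by simp), CFC.posPart_def]
  exact cfcₙ_congr fun x _ => Real.mul_self_sqrt (posPart_nonneg x)

lemma fell_key (π₁ : A →⋆ₐ[ℂ] (H₁ →L[ℂ] H₁)) (π₂ : A →⋆ₐ[ℂ] (H₂ →L[ℂ] H₂))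
    (hker : ∀ a : A, π₂ a = 0 → π₁ a = 0)
    {c : A} (hc : IsSelfAdjoint c) (h : (π₂ c).IsPositive) :
    (π₁ c).IsPositive := by
  obtain ⟨s, hs, hss⟩ := fell_negPart_sq hc
  have hnegsa : IsSelfAdjoint (c⁻ : A) := by
    rw [← hss, IsSelfAdjoint, star_mul, hs.star_eq]
  have hN : (π₂ (c⁻ : A)).IsPositive := hss ▸ fell_sq π₂ hs
  have hNsa : IsSelfAdjoint (π₂ (c⁻ : A)) := hN.isSelfAdjoint
  have hNadj : adjoint (π₂ (c⁻ : A)) = π₂ (c⁻ : A) := by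
    rw [← star_eq_adjoint]; exact hNsa
  have key : (c⁻ : A) * c * c⁻ = -(c⁻ * c⁻ * c⁻) := by
    nth_rw 2 [← CFC.posPart_sub_negPart c hc]
    simp [mul_sub, sub_mul, CFC.negPart_mul_posPart]
  set X := π₂ ((c⁻ : A) * c⁻ * c⁻) with hX
  have hXpos : X.IsPositive := by
    have := hN.conj_adjoint (π₂ (c⁻ : A))
    rw [hNadj] at this
    simpa [hX, map_mul, mul_def, comp_assoc] using this
  have hXneg : (-X).IsPositive := by
    have := h.conj_adjoint (π₂ (c⁻ : A))
    rw [hNadj] at this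
    have h2 : π₂ ((c⁻ : A) * c * c⁻) = -X := by rw [key, map_neg]
    rw [← h2, map_mul, map_mul, mul_assoc]
    exact this
  have hX0 : X = 0 := by
    refine le_antisymm ?_ ?_
    · rw [← neg_nonneg, nonneg_iff_isPositive]; exact hXneg
    · rw [nonneg_iff_isPositive]; exact hXpos
  have hnegsq : IsSelfAdjoint ((c⁻ : A) * c⁻) := by
    rw [IsSelfAdjoint, star_mul, hnegsa.star_eq]
  have hN2 : π₂ ((c⁻ : A) * c⁻) = 0 := by
    refine CStarRing.star_mul_self_eq_zero_iff _ |>.mp ?_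
    rw [← map_star, ← map_mul, hnegsq.star_eq,
      show (c⁻ : A) * c⁻ * ((c⁻ : A) * c⁻) = c⁻ * (c⁻ * c⁻ * c⁻) by noncomm_ring,
      map_mul, ← hX, hX0, mul_zero]
  have hNzero : π₂ (c⁻ : A) = 0 := by
    refine CStarRing.star_mul_self_eq_zero_iff _ |>.mp ?_
    rw [← map_star, ← map_mul, hnegsa.star_eq, hN2]
  have h1neg : π₁ (c⁻ : A) = 0 := hker _ hNzero
  obtain ⟨p, hp, hpp⟩ := fell_posPart_sq hc
  have : π₁ c = π₁ (c⁺ : A) := by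
    conv_lhs => rw [← CFC.posPart_sub_negPart c hc]
    rw [map_sub, h1neg, sub_zero]
  rw [this, ← hpp]
  exact fell_sq π₁ hp

lemma fell_herm_re (π : A →⋆ₐ[ℂ] (H₁ →L[ℂ] H₁)) (b' : A) (x : H₁) :
    (inner ℂ x ((π ((2:ℂ)⁻¹ • (b' + star b'))) x) : ℂ).re = (inner ℂ x (π b' x) : ℂ).re := by
  have hadj : π (star b') = adjoint (π b') := by
    rw [← star_eq_adjoint, map_star]
  have h2 : (inner ℂ x ((π (star b')) x) : ℂ) = (starRingEnd ℂ) (inner ℂ x (π b' x) : ℂ) := by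
    rw [hadj, adjoint_inner_right, ← inner_conj_symm]
  rw [map_smul, map_add]
  simp only [smul_apply, add_apply]
  rw [inner_smul_right, inner_add_right, h2, Complex.add_conj]
  set r : ℝ := (inner ℂ x (π b' x) : ℂ).re
  push_cast
  rw [show (2⁻¹:ℂ) * ((2:ℂ) * (r:ℂ)) = (r:ℂ) by ring, Complex.ofReal_re]

lemma fell_sum_inner {ι : Type*} (s : Finset ι) (π : A →⋆ₐ[ℂ] (H₁ →L[ℂ] H₁))
    (cf : ι → ℂ) (g : ι → A) (x : H₁) :
    (inner ℂ x (π (∑ a ∈ s, cf a • g a) x) : ℂ)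
      = ∑ a ∈ s, cf a * (inner ℂ x (π (g a) x) : ℂ) := by
  rw [map_sum]
  simp only [map_smul]
  rw [ContinuousLinearMap.sum_apply, inner_sum]
  simp only [ContinuousLinearMap.smul_apply, inner_smul_right]

lemma fell_mem_closure (π₁ : A →⋆ₐ[ℂ] (H₁ →L[ℂ] H₁)) (π₂ : A →⋆ₐ[ℂ] (H₂ →L[ℂ] H₂))
    (hker : ∀ a : A, π₂ a = 0 → π₁ a = 0)
    (ψ : H₁) (hψ : ‖ψ‖ = 1) (F : Finset A) :
    (fun a : ↥F => (inner ℂ ψ (π₁ (a : A) ψ) : ℂ)) ∈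
      closure (convexHull ℝ
        {v : ↥F → ℂ | ∃ φ : H₂, ‖φ‖ = 1 ∧ ∀ a : ↥F, v a = (inner ℂ φ (π₂ (a : A) φ) : ℂ)}) := by
  classical
  set VS : Set (↥F → ℂ) :=
    {v | ∃ φ : H₂, ‖φ‖ = 1 ∧ ∀ a : ↥F, v a = (inner ℂ φ (π₂ (a : A) φ) : ℂ)} with hVSdef
  by_contra hpc
  obtain ⟨f, u, hfu, hup⟩ := geometric_hahn_banach_closed_point
    ((convex_convexHull ℝ VS).closure) isClosed_closure hpc
  set cf : ↥F → ℂ :=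
    fun a => (f (Pi.single a 1) : ℂ) - (f (Pi.single a Complex.I) : ℂ) * Complex.I with hcf
  have hfz : ∀ (a : ↥F) (z : ℂ), f (Pi.single a z) = (cf a * z).re := by
    intro a z
    have hz : Pi.single a z = z.re • (Pi.single a (1:ℂ) : ↥F → ℂ) + z.im • (Pi.single a Complex.I : ↥F → ℂ) := by
      rw [← Pi.single_smul, ← Pi.single_smul, ← Pi.single_add]
      congr 1
      rw [Complex.real_smul, Complex.real_smul, mul_one]
      exact (Complex.re_add_im z).symm
    rw [hz, map_add, map_smul, map_smul]
    simp only [smul_eq_mul, hcf]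
    simp only [Complex.sub_re, Complex.mul_re, Complex.mul_im, Complex.I_re, Complex.I_im,
      Complex.ofReal_re, Complex.ofReal_im, Complex.sub_im]
    ring
  have hfv : ∀ v : ↥F → ℂ, f v = ∑ a, (cf a * v a).re := by
    intro v
    have hv : v = ∑ a, Pi.single a (v a) := (Finset.univ_sum_single v).symm
    conv_lhs => rw [hv]
    rw [map_sum]
    exact Finset.sum_congr rfl fun a _ => hfz a (v a)
  set b' : A := ∑ a : ↥F, cf a • (a : A) with hb'
  set b : A := (2:ℂ)⁻¹ • (b' + star b') with hb
  have hbsa : IsSelfAdjoint b := by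
    rw [hb, IsSelfAdjoint, star_smul, star_add, star_star, add_comm]
    congr 1
    simp [Complex.star_def, Complex.conj_inv]
  -- value of f on a "state vector" of any representation
  have hfval₁ : ∀ x : H₁, f (fun a : ↥F => (inner ℂ x (π₁ (a : A) x) : ℂ))
      = (inner ℂ x (π₁ b x) : ℂ).re := by
    intro x
    rw [hfv, hb, fell_herm_re π₁ b' x, hb',
      fell_sum_inner (Finset.univ) π₁ cf (fun a : ↥F => (a : A)) x, Complex.re_sum]
  have hfval₂ : ∀ x : H₂, f (fun a : ↥F => (inner ℂ x (π₂ (a : A) x) : ℂ))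
      = (inner ℂ x (π₂ b x) : ℂ).re := by
    intro x
    rw [hfv, hb, fell_herm_re π₂ b' x, hb',
      fell_sum_inner (Finset.univ) π₂ cf (fun a : ↥F => (a : A)) x, Complex.re_sum]
  have hup' : u < (inner ℂ ψ (π₁ b ψ) : ℂ).re := by
    rw [← hfval₁ ψ]; exact hup
  have hvs : ∀ φ : H₂, ‖φ‖ = 1 → (inner ℂ φ (π₂ b φ) : ℂ).re < u := by
    intro φ hφ
    rw [← hfval₂ φ]
    exact hfu _ (subset_closure (subset_convexHull ℝ VS ⟨φ, hφ, fun a => rfl⟩))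
  set d : A := (u : ℂ) • 1 - b with hd
  have hdsa : IsSelfAdjoint d := by
    rw [hd, IsSelfAdjoint, star_sub, star_smul, star_one, Complex.star_def,
      Complex.conj_ofReal, hbsa.star_eq]
  have hpos : (π₂ d).IsPositive := by
    refine ⟨ContinuousLinearMap.isSelfAdjoint_iff_isSymmetric.mp (hdsa.map π₂), fun x => ?_⟩
    have hdx : (π₂ d) x = (u : ℂ) • x - (π₂ b) x := by
      rw [hd, map_sub, map_smul, map_one]
      simp
    have hre : (π₂ d).reApplyInnerSelf x = (inner ℂ x ((π₂ d) x) : ℂ).re := by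
      rw [reApplyInnerSelf_apply, inner_re_symm]
      simp
    rw [hre, hdx, inner_sub_right, inner_smul_right]
    have hrr : (inner ℂ x x : ℂ).re = ‖x‖^2 := by
      rw [← RCLike.re_to_complex]; exact inner_self_eq_norm_sq x
    have him : (inner ℂ x x : ℂ).im = 0 := by
      rw [← RCLike.im_to_complex]; exact inner_self_im x
    rcases eq_or_ne x 0 with rfl | hx
    · simp
    · set φ := ‖x‖⁻¹ • x with hφdef
      have hφ : ‖φ‖ = 1 := norm_smul_inv_norm hx
      have hxφ : x = (‖x‖ : ℝ) • φ := by
        rw [hφdef, smul_smul, mul_inv_cancel₀ (norm_ne_zero_iff.mpr hx), one_smul]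
      have hxφc : x = ((‖x‖ : ℂ)) • φ := by rw [Complex.coe_smul]; exact hxφ
      have hTx : (inner ℂ x (π₂ b x) : ℂ) = ((‖x‖^2 : ℝ) : ℂ) * (inner ℂ φ (π₂ b φ) : ℂ) := by
        conv_lhs => rw [hxφc]
        rw [map_smul, inner_smul_left, inner_smul_right, Complex.conj_ofReal]
        push_cast
        ring
      rw [hTx]
      have h1 := hvs φ hφ
      simp only [Complex.sub_re, Complex.mul_re, Complex.ofReal_re, Complex.ofReal_im,
        Complex.re_ofReal_mul, hrr, him]
      nlinarith [sq_nonneg ‖x‖]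
  have hkey := fell_key π₁ π₂ hker hdsa hpos
  have h0 : 0 ≤ (inner ℂ ψ ((π₁ d) ψ) : ℂ).re := by
    have h2 := hkey.2 ψ
    rw [reApplyInnerSelf_apply, inner_re_symm] at h2
    simpa using h2
  have hval : (inner ℂ ψ ((π₁ d) ψ) : ℂ).re = u - (inner ℂ ψ (π₁ b ψ) : ℂ).re := by
    have hdx : (π₁ d) ψ = (u : ℂ) • ψ - (π₁ b) ψ := by
      rw [hd, map_sub, map_smul, map_one]; simp
    rw [hdx, inner_sub_right, inner_smul_right, inner_self_eq_norm_sq_to_K, hψ]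
    simp
  rw [hval] at h0
  linarith
end aux

/-- Fell's theorem, direction (i) ⇒ (iv): if `π₁`, `π₂` are representations of a unital
C*-algebra `A` with `ker π₂ ⊆ ker π₁`, then every vector state of `π₁` is approximated,
uniformly on finite sets of observables, by convex combinations of vector states of `π₂`. -/
theorem fell_vector_state_approximation
    {A : Type*} [NormedRing A] [StarRing A] [CStarRing A]
    [NormedAlgebra ℂ A] [StarModule ℂ A] [CompleteSpace A]
    {H₁ H₂ : Type*}
    [NormedAddCommGroup H₁] [InnerProductSpace ℂ H₁] [CompleteSpace H₁]
    [NormedAddCommGroup H₂] [InnerProductSpace ℂ H₂] [CompleteSpace H₂]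
    (π₁ : A →⋆ₐ[ℂ] (H₁ →L[ℂ] H₁)) (π₂ : A →⋆ₐ[ℂ] (H₂ →L[ℂ] H₂))
    (hker : ∀ a : A, π₂ a = 0 → π₁ a = 0)
    (ψ : H₁) (hψ : ‖ψ‖ = 1) (ε : ℝ) (hε : 0 < ε) (F : Finset A) :
    ∃ (n : ℕ) (φ : Fin n → H₂) (t : Fin n → ℝ),
      (∀ i, ‖φ i‖ = 1) ∧ (∀ i, 0 ≤ t i) ∧ (∑ i, t i) = 1 ∧
      ∀ a ∈ F,
        ‖(inner ℂ ψ (π₁ a ψ) : ℂ) - ∑ i, (t i : ℂ) * (inner ℂ (φ i) (π₂ a (φ i)) : ℂ)‖ < ε := by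
  classical
  have hmem := fell_mem_closure π₁ π₂ hker ψ hψ F
  set p : ↥F → ℂ := fun a : ↥F => (inner ℂ ψ (π₁ (a : A) ψ) : ℂ) with hp
  obtain ⟨q, hq, hdist⟩ := Metric.mem_closure_iff.mp hmem ε hε
  rw [mem_convexHull_iff_exists_fintype] at hq
  obtain ⟨ι, hι, w, z, hw0, hw1, hzVS, hsum⟩ := hq
  choose Φ hΦn hΦe using hzVS
  set n := Fintype.card ι with hn
  set e : Fin n ≃ ι := (Fintype.equivFin ι).symm with he
  refine ⟨n, fun k => Φ (e k), fun k => w (e k), fun k => hΦn (e k), fun k => hw0 (e k), ?_, ?_⟩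
  · rw [Equiv.sum_comp e w]; exact hw1
  · intro a ha
    have hqa : q ⟨a, ha⟩
        = ∑ k : Fin n, ((w (e k) : ℝ) : ℂ) * (inner ℂ (Φ (e k)) (π₂ a (Φ (e k))) : ℂ) := by
      rw [← hsum, Finset.sum_apply, ← Equiv.sum_comp e (fun i => (w i • z i) ⟨a, ha⟩)]
      refine Finset.sum_congr rfl fun k _ => ?_
      rw [Pi.smul_apply, hΦe (e k) ⟨a, ha⟩, Complex.real_smul]
    rw [← hqa]
    have hpa : (inner ℂ ψ (π₁ a ψ) : ℂ) = p ⟨a, ha⟩ := rfl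
    calc ‖(inner ℂ ψ (π₁ a ψ) : ℂ) - q ⟨a, ha⟩‖ = ‖(p - q) ⟨a, ha⟩‖ := by
          rw [Pi.sub_apply, hpa]
      _ ≤ ‖p - q‖ := norm_le_pi_norm (p - q) ⟨a, ha⟩
      _ = dist p q := (dist_eq_norm p q).symm
      _ < ε := hdist
end
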